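/- arXiv:2302.01625 — 2 statements merged into one kernel-verified Lean document; each statement's English description precedes it below -/
import Mathlib

section
/- Uniform moment bounds: under the stated drift hypotheses, assuming additionally that X_n ≥ 0 almost surely for all n, for every r > 0 there exists a constant c* = c*(r, ε, K, k, x₀) < ∞ such that E[(X_n)^r] ≤ c* for all n ∈ ℕ. -/
open MeasureTheory Filter

private lemma exp_series_tail (x : ℝ) :
    Real.exp x = 1 + x + ∑' n : ℕ, x ^ (n + 2) / (n + 2).factorial := by
  have h1 : Real.exp x = ∑' n : ℕ, x ^ n / n.factorial := by
    rw [Real.exp_eq_exp_ℝ, NormedSpace.exp_eq_tsum_div]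
  have h2 := Summable.sum_add_tsum_nat_add 2 (Real.summable_pow_div_factorial x)
  rw [h1, ← h2]
  simp [Finset.sum_range_succ]

private lemma exp_quad_bound {η lam k z : ℝ} (hη : 0 < η) (hel : η ≤ lam) (hz : |z| ≤ k) :
    Real.exp (η * z) ≤ 1 + η * z + η ^ 2 * ((Real.exp (lam * k) - 1 - lam * k) / lam ^ 2) := by
  have hl0 : 0 < lam := lt_of_lt_of_le hη hel
  have hk0 : 0 ≤ k := le_trans (abs_nonneg z) hz
  have hA := exp_series_tail (η * z)
  have hB := exp_series_tail (lam * k)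
  have hsum1 : Summable (fun n : ℕ => (η*z)^(n+2)/(n+2).factorial) :=
    (summable_nat_add_iff 2).mpr (Real.summable_pow_div_factorial (η*z))
  have hsum2 : Summable (fun n : ℕ => η^2/lam^2 * ((lam*k)^(n+2)/(n+2).factorial)) :=
    ((summable_nat_add_iff 2).mpr (Real.summable_pow_div_factorial (lam*k))).mul_left _
  have hterm : ∀ n : ℕ, (η*z)^(n+2)/(n+2).factorial
      ≤ η^2/lam^2 * ((lam*k)^(n+2)/(n+2).factorial) := by
    intro n
    have key : (η*z)^(n+2) ≤ η^2/lam^2 * (lam*k)^(n+2) := by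
      have h1 : (η*z)^(n+2) ≤ (η*k)^(n+2) := by
        calc (η*z)^(n+2) ≤ |(η*z)^(n+2)| := le_abs_self _
          _ = |η*z|^(n+2) := abs_pow _ _
          _ ≤ (η*k)^(n+2) := by
              apply pow_le_pow_left₀ (abs_nonneg _)
              rw [abs_mul, abs_of_pos hη]
              exact mul_le_mul_of_nonneg_left hz hη.le
      have hpow : η^(n+2) ≤ η^2/lam^2 * lam^(n+2) := by
        have hp : η^n ≤ lam^n := pow_le_pow_left₀ hη.le hel n
        calc η^(n+2) = η^2 * η^n := by ring
          _ ≤ η^2 * lam^n := mul_le_mul_of_nonneg_left hp (by positivity)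
          _ = η^2/lam^2 * lam^(n+2) := by field_simp; ring
      calc (η*z)^(n+2) ≤ (η*k)^(n+2) := h1
        _ = η^(n+2) * k^(n+2) := mul_pow _ _ _
        _ ≤ (η^2/lam^2 * lam^(n+2)) * k^(n+2) :=
            mul_le_mul_of_nonneg_right hpow (pow_nonneg hk0 _)
        _ = η^2/lam^2 * (lam*k)^(n+2) := by rw [mul_pow]; ring
    calc (η*z)^(n+2)/(n+2).factorial ≤ (η^2/lam^2 * (lam*k)^(n+2))/(n+2).factorial := by
          gcongr
      _ = η^2/lam^2 * ((lam*k)^(n+2)/(n+2).factorial) := by ring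
  have htsum := Summable.tsum_le_tsum hterm hsum1 hsum2
  rw [tsum_mul_left] at htsum
  have hgoal_eq : 1 + η*z + η^2*((Real.exp (lam*k)-1-lam*k)/lam^2)
      = 1 + η*z + η^2/lam^2*(Real.exp (lam*k)-1-lam*k) := by ring
  have hT2 : Real.exp (lam*k)-1-lam*k = ∑' n : ℕ, (lam*k)^(n+2)/(n+2).factorial := by
    rw [hB]; ring
  rw [hgoal_eq, hA, hT2]
  linarith [htsum]

private lemma quad_le_exp {x : ℝ} (hx : 0 ≤ x) : 1 + x + x^2/2 ≤ Real.exp x := by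
  have hA := exp_series_tail x
  have hsum : Summable (fun n : ℕ => x^(n+2)/(n+2).factorial) :=
    (summable_nat_add_iff 2).mpr (Real.summable_pow_div_factorial x)
  have h0 : x^(0+2)/((0:ℕ)+2).factorial ≤ ∑' n : ℕ, x^(n+2)/(n+2).factorial :=
    Summable.le_tsum hsum 0 (fun j _ => by positivity)
  have : x^2/2 ≤ ∑' n : ℕ, x^(n+2)/(n+2).factorial := by
    convert h0 using 2 <;> norm_num
  linarith [hA, this]

private lemma pow_div_le_exp {y : ℝ} (hy : 0 ≤ y) {N : ℕ} (hN : 0 < N) :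
    (y / N)^N ≤ Real.exp y := by
  have hN' : (0:ℝ) < N := by exact_mod_cast hN
  have h1 : y/N ≤ Real.exp (y/N) := by
    have := Real.add_one_le_exp (y/N)
    linarith
  calc (y/N)^N ≤ (Real.exp (y/N))^N := pow_le_pow_left₀ (by positivity) h1 N
    _ = Real.exp ((N:ℝ) * (y/N)) := by rw [Real.exp_nat_mul]
    _ = Real.exp y := by rw [mul_div_cancel₀ _ (ne_of_gt hN')]

private lemma rpow_le_one_add_exp {η r x : ℝ} (hη : 0 < η) (hx : 0 ≤ x) {N : ℕ}
    (hN : 0 < N) (hrN : r ≤ N) (hr : 0 ≤ r) :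
    x ^ r ≤ 1 + (N:ℝ)^N/η^N * Real.exp (η*x) := by
  have hC : (0:ℝ) ≤ (N:ℝ)^N/η^N * Real.exp (η*x) := by positivity
  rcases le_total x 1 with h | h
  · have h1 : x ^ r ≤ 1 := Real.rpow_le_one hx h hr
    linarith
  · have h1 : x ^ r ≤ x ^ (N:ℝ) := Real.rpow_le_rpow_of_exponent_le h hrN
    rw [Real.rpow_natCast] at h1
    have h2 : (η*x/N)^N ≤ Real.exp (η*x) := pow_div_le_exp (by positivity) hN
    have hN' : (0:ℝ) < N := by exact_mod_cast hN
    have h3 : x^N = (N:ℝ)^N/η^N * (η*x/N)^N := by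
      rw [div_pow, mul_pow]
      field_simp
    have h4 : (N:ℝ)^N/η^N * (η*x/N)^N ≤ (N:ℝ)^N/η^N * Real.exp (η*x) :=
      mul_le_mul_of_nonneg_left h2 (by positivity)
    linarith

set_option maxHeartbeats 1000000 in
theorem stmt_8
    {Ω : Type*} {m0 : MeasurableSpace Ω} {μ : Measure Ω} [IsProbabilityMeasure μ]
    (ℱ : Filtration ℕ m0) (X : ℕ → Ω → ℝ) (hadp : Adapted ℱ X)
    (x0 : ℝ) (hX0 : ∀ᵐ ω ∂μ, X 0 ω = x0)
    (k ε K : ℝ) (hk : 0 < k) (hε0 : 0 < ε) (hεk : ε ≤ k)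
    (hbdd : ∀ n : ℕ, ∀ᵐ ω ∂μ, |X (n + 1) ω - X n ω| ≤ k)
    (hdrift : ∀ n : ℕ, ∀ᵐ ω ∂μ, K ≤ X n ω →
      (μ[(fun ω' => X (n + 1) ω' - X n ω') | ℱ n]) ω ≤ -ε)
    (lam : ℝ) (hlam : 0 < lam)
    (c η ρ D : ℝ)
    (hc : c = (Real.exp (lam * k) - 1 - lam * k) / lam ^ 2)
    (hη0 : 0 < η) (hηlt : η < min lam (ε / (2 * c)))
    (hρ : ρ = 1 - η * ε / 2)
    (hD : D = Real.exp (lam * k))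
    (hpos : ∀ n : ℕ, ∀ᵐ ω ∂μ, 0 ≤ X n ω) :
    ∀ r : ℝ, 0 < r →
      ∃ cstar : ℝ,
        (∀ n : ℕ, Integrable (fun ω => X n ω ^ r) μ) ∧
        (∀ n : ℕ, ∫ ω, X n ω ^ r ∂μ ≤ cstar) := by
  -- basic constants
  have hel : η ≤ lam := (lt_min_iff.mp hηlt).1.le
  have hc0 : 0 < c := by
    rw [hc]
    have h1 : lam * k + 1 < Real.exp (lam * k) :=
      Real.add_one_lt_exp (ne_of_gt (mul_pos hlam hk))
    have h2 : (0:ℝ) < lam ^ 2 := by positivity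
    apply div_pos (by linarith) h2
  have h2c : η * (2 * c) < ε := by
    have := (lt_min_iff.mp hηlt).2
    exact (lt_div_iff₀ (by positivity)).mp this
  have hηc : η ^ 2 * c ≤ η * ε / 2 := by nlinarith
  have hck : k ^ 2 / 2 ≤ c := by
    rw [hc, le_div_iff₀ (by positivity : (0:ℝ) < lam ^ 2)]
    nlinarith [quad_le_exp (x := lam * k) (by positivity : (0:ℝ) ≤ lam * k)]
  have hρ0 : 0 < ρ := by
    -- η * k^2 ≤ 2 η c < ε ≤ k hence η k < 1 so η ε ≤ η k < 1
    have h1 : η * k ^ 2 < k := by nlinarith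
    have h2 : η * k < 1 := by nlinarith
    have h3 : η * ε ≤ η * k := by nlinarith
    rw [hρ]; nlinarith
  have hρ1 : ρ < 1 := by rw [hρ]; nlinarith
  -- measurability and boundedness
  have hXm : ∀ n, Measurable (X n) := fun n => (hadp n).mono (ℱ.le n) le_rfl
  have hbound : ∀ n, ∀ᵐ ω ∂μ, |X n ω| ≤ |x0| + n * k := by
    intro n
    induction n with
    | zero => filter_upwards [hX0] with ω h; simp [h]
    | succ n ih =>
        filter_upwards [ih, hbdd n] with ω h1 h2
        have h3 : |X (n+1) ω| ≤ |X n ω| + |X (n+1) ω - X n ω| := by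
          have := abs_add_le (X n ω) (X (n+1) ω - X n ω)
          simpa using this
        push_cast
        linarith
  have hint : ∀ (f : Ω → ℝ) (C : ℝ), Measurable f → (∀ᵐ ω ∂μ, |f ω| ≤ C) →
      Integrable f μ := by
    intro f C hf hC
    refine (integrable_const C).mono' hf.aestronglyMeasurable ?_
    filter_upwards [hC] with ω h
    simpa [Real.norm_eq_abs] using h
  -- Y and its integrability
  set Y : ℕ → Ω → ℝ := fun n ω => Real.exp (η * X n ω) with hYdef
  have hYm : ∀ n, Measurable (Y n) := fun n =>
    Real.measurable_exp.comp (measurable_const.mul (hXm n))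
  have hYint : ∀ n, Integrable (Y n) μ := by
    intro n
    refine hint _ (Real.exp (η * (|x0| + n * k))) (hYm n) ?_
    filter_upwards [hbound n] with ω h
    rw [abs_of_pos (Real.exp_pos _)]
    exact Real.exp_le_exp.mpr (mul_le_mul_of_nonneg_left
      (le_trans (le_abs_self _) h) hη0.le)
  set B : ℝ := Real.exp (η * K) * Real.exp (η * k) with hBdef
  have hB0 : 0 < B := mul_pos (Real.exp_pos _) (Real.exp_pos _)
  -- key one-step inequality
  have hkey : ∀ n, ∫ ω, Y (n+1) ω ∂μ ≤ ρ * ∫ ω, Y n ω ∂μ + B := by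
    intro n
    set Δ : Ω → ℝ := fun ω' => X (n + 1) ω' - X n ω' with hΔdef
    have hΔm : Measurable Δ := (hXm (n+1)).sub (hXm n)
    have hΔint : Integrable Δ μ := hint _ k hΔm (hbdd n)
    set g : Ω → ℝ := fun ω => Real.exp (η * Δ ω) with hgdef
    have hgm : Measurable g := Real.measurable_exp.comp (measurable_const.mul hΔm)
    have hg_le : ∀ᵐ ω ∂μ, g ω ≤ Real.exp (η * k) := by
      filter_upwards [hbdd n] with ω h
      exact Real.exp_le_exp.mpr (mul_le_mul_of_nonneg_left
        (le_trans (le_abs_self _) h) hη0.le)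
    have hgint : Integrable g μ := by
      refine hint _ (Real.exp (η * k)) hgm ?_
      filter_upwards [hg_le] with ω h
      rw [abs_of_pos (Real.exp_pos _)]; exact h
    have hmul : Y (n+1) = fun ω => Y n ω * g ω := by
      funext ω
      simp only [hYdef, hgdef, hΔdef]
      rw [← Real.exp_add]
      ring_nf
    have hfmeas : StronglyMeasurable[ℱ n] (Y n) :=
      Real.continuous_exp.comp_stronglyMeasurable ((hadp n).const_mul η).stronglyMeasurable
    have hfg_int : Integrable (Y n * g) μ := by
      have := hYint (n+1)
      rw [hmul] at this
      exact this
    have hpull : μ[Y (n+1)|ℱ n] =ᵐ[μ] Y n * μ[g|ℱ n] := by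
      rw [hmul]
      exact condExp_mul_of_stronglyMeasurable_left hfmeas hfg_int hgint
    -- conditional expectation bounds
    have haux_int : Integrable (fun ω => η * Δ ω + (1 + η^2*c)) μ :=
      (hΔint.const_mul η).add (integrable_const _)
    have hg_quad : ∀ᵐ ω ∂μ, g ω ≤ η * Δ ω + (1 + η^2*c) := by
      filter_upwards [hbdd n] with ω h
      have h2 := exp_quad_bound hη0 hel h
      rw [← hc] at h2
      show Real.exp (η * (X (n+1) ω - X n ω)) ≤ η * (X (n+1) ω - X n ω) + (1 + η^2*c)
      linarith
    have hcond_le : μ[g|ℱ n] ≤ᵐ[μ] μ[(fun ω => η * Δ ω + (1 + η^2*c))|ℱ n] :=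
      condExp_mono hgint haux_int hg_quad
    have hcond_eq : μ[(fun ω => η * Δ ω + (1 + η^2*c))|ℱ n]
        =ᵐ[μ] fun ω => η * (μ[Δ|ℱ n]) ω + (1 + η^2*c) := by
      have h1 : (fun ω => η * Δ ω + (1 + η^2*c))
          = (fun ω => η * Δ ω) + (fun _ => 1 + η^2*c) := rfl
      rw [h1]
      refine (condExp_add (hΔint.const_mul η) (integrable_const _) _).trans ?_
      have h2 : μ[(fun ω => η * Δ ω)|ℱ n] =ᵐ[μ] fun ω => η * (μ[Δ|ℱ n]) ω := by
        have h3 : (fun ω => η * Δ ω) = η • Δ := by funext ω; simp [smul_eq_mul]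
        rw [h3]
        refine (condExp_smul η Δ _).trans ?_
        filter_upwards with ω
        simp [smul_eq_mul]
      have h4 : μ[(fun _ : Ω => 1 + η^2*c)|ℱ n] = fun _ => 1 + η^2*c :=
        condExp_const (ℱ.le n) _
      filter_upwards [h2] with ω hω
      simp only [Pi.add_apply, hω, h4]
    have hG_le : μ[g|ℱ n] ≤ᵐ[μ] fun ω => η * (μ[Δ|ℱ n]) ω + (1 + η^2*c) :=
      hcond_le.trans hcond_eq.le
    have hG_lek : μ[g|ℱ n] ≤ᵐ[μ] fun _ => Real.exp (η * k) := by
      have h := condExp_mono (m := (ℱ n : MeasurableSpace Ω)) hgint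
        (integrable_const (Real.exp (η * k))) hg_le
      rwa [condExp_const (ℱ.le n)] at h
    have hG_ge : 0 ≤ᵐ[μ] μ[g|ℱ n] :=
      condExp_nonneg (Filter.Eventually.of_forall fun ω => (Real.exp_pos _).le)
    -- pointwise a.e. bound
    have hpoint : ∀ᵐ ω ∂μ, Y n ω * (μ[g|ℱ n]) ω ≤ ρ * Y n ω + B := by
      filter_upwards [hG_le, hG_lek, hG_ge, hdrift n] with ω h1 h2 h3 h4
      have hf_pos : 0 < Y n ω := Real.exp_pos _
      by_cases hcase : K ≤ X n ω
      · have hdr : (μ[Δ|ℱ n]) ω ≤ -ε := h4 hcase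
        have hGρ : (μ[g|ℱ n]) ω ≤ ρ := by
          have h5 : η * (μ[Δ|ℱ n]) ω ≤ η * (-ε) :=
            mul_le_mul_of_nonneg_left hdr hη0.le
          rw [hρ]
          have h6 := h1
          nlinarith
        have h9 := mul_le_mul_of_nonneg_left hGρ hf_pos.le
        have h10 : ρ * Y n ω = Y n ω * ρ := mul_comm _ _
        linarith
      · push_neg at hcase
        have hfK : Y n ω ≤ Real.exp (η * K) := by
          simp only [hYdef]
          exact Real.exp_le_exp.mpr (mul_le_mul_of_nonneg_left hcase.le hη0.le)
        have h7 : Y n ω * (μ[g|ℱ n]) ω ≤ Real.exp (η * K) * Real.exp (η * k) :=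
          mul_le_mul hfK h2 h3 (Real.exp_pos _).le
        have h8 : 0 ≤ ρ * Y n ω := mul_nonneg hρ0.le hf_pos.le
        rw [hBdef]
        linarith
    -- integrate
    haveI : SigmaFinite (μ.trim (ℱ.le n)) := inferInstance
    have hstep1 : ∫ ω, Y (n+1) ω ∂μ = ∫ ω, (μ[Y (n+1)|ℱ n]) ω ∂μ :=
      (integral_condExp (ℱ.le n)).symm
    have hstep2 : ∫ ω, (μ[Y (n+1)|ℱ n]) ω ∂μ = ∫ ω, Y n ω * (μ[g|ℱ n]) ω ∂μ :=
      integral_congr_ae hpull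
    have hprod_int : Integrable (fun ω => Y n ω * (μ[g|ℱ n]) ω) μ :=
      integrable_condExp.congr hpull
    have hrhs_int : Integrable (fun ω => ρ * Y n ω + B) μ :=
      ((hYint n).const_mul ρ).add (integrable_const B)
    have hstep3 : ∫ ω, Y n ω * (μ[g|ℱ n]) ω ∂μ ≤ ∫ ω, (ρ * Y n ω + B) ∂μ :=
      integral_mono_ae hprod_int hrhs_int hpoint
    have hstep4 : ∫ ω, (ρ * Y n ω + B) ∂μ = ρ * ∫ ω, Y n ω ∂μ + B := by
      rw [integral_add ((hYint n).const_mul ρ) (integrable_const B),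
        integral_const_mul, integral_const]
      simp
    rw [hstep1, hstep2]
    rw [hstep4] at hstep3
    exact hstep3
  -- uniform bound on exp moments
  set M : ℝ := max (Real.exp (η * x0)) (B / (1 - ρ)) with hMdef
  have hM : ∀ n, ∫ ω, Y n ω ∂μ ≤ M := by
    intro n
    induction n with
    | zero =>
        have h0 : ∫ ω, Y 0 ω ∂μ = Real.exp (η * x0) := by
          rw [show Real.exp (η * x0) = ∫ _ω, Real.exp (η * x0) ∂μ by
            rw [integral_const]; simp]
          refine integral_congr_ae ?_
          filter_upwards [hX0] with ω h
          simp [hYdef, h]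
        rw [h0]
        exact le_max_left _ _
    | succ n ih =>
        have h1 := hkey n
        have h2 : B ≤ (1 - ρ) * M := by
          have h3 : B / (1 - ρ) ≤ M := le_max_right _ _
          rw [div_le_iff₀ (by linarith)] at h3
          linarith [h3]
        have h4 : ρ * ∫ ω, Y n ω ∂μ ≤ ρ * M := mul_le_mul_of_nonneg_left ih hρ0.le
        nlinarith
  -- conclude
  intro r hr
  set N : ℕ := max 1 ⌈r⌉₊ with hNdef
  have hN0 : 0 < N := lt_of_lt_of_le one_pos (le_max_left _ _)
  have hrN : r ≤ (N : ℝ) := by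
    refine le_trans (Nat.le_ceil r) ?_
    exact_mod_cast le_max_right 1 ⌈r⌉₊
  set C : ℝ := (N:ℝ)^N/η^N with hCdef
  have hC0 : 0 ≤ C := by positivity
  have hptwise : ∀ n, ∀ᵐ ω ∂μ, X n ω ^ r ≤ 1 + C * Y n ω := by
    intro n
    filter_upwards [hpos n] with ω h
    exact rpow_le_one_add_exp hη0 h hN0 hrN hr.le
  have hXr_int : ∀ n, Integrable (fun ω => X n ω ^ r) μ := by
    intro n
    refine hint _ (1 + C * Real.exp (η * (|x0| + n * k))) ?_ ?_
    · exact (Real.continuous_rpow_const hr.le).measurable.comp (hXm n)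
    · filter_upwards [hpos n, hbound n] with ω h1 h2
      have h3 : X n ω ^ r ≤ 1 + C * Y n ω := rpow_le_one_add_exp hη0 h1 hN0 hrN hr.le
      have h4 : Y n ω ≤ Real.exp (η * (|x0| + n * k)) :=
        Real.exp_le_exp.mpr (mul_le_mul_of_nonneg_left
          (le_trans (le_abs_self _) h2) hη0.le)
      rw [abs_of_nonneg (Real.rpow_nonneg h1 r)]
      nlinarith
  refine ⟨1 + C * M, hXr_int, fun n => ?_⟩
  have hrhs_int : Integrable (fun ω => 1 + C * Y n ω) μ :=
    (integrable_const 1).add ((hYint n).const_mul C)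
  have h5 : ∫ ω, X n ω ^ r ∂μ ≤ ∫ ω, (1 + C * Y n ω) ∂μ :=
    integral_mono_ae (hXr_int n) hrhs_int (hptwise n)
  have h6 : ∫ ω, (1 + C * Y n ω) ∂μ = 1 + C * ∫ ω, Y n ω ∂μ := by
    rw [integral_add (integrable_const 1) ((hYint n).const_mul C),
      integral_const_mul, integral_const]
    simp
  rw [h6] at h5
  have h7 : C * ∫ ω, Y n ω ∂μ ≤ C * M := mul_le_mul_of_nonneg_left (hM n) hC0
  linarith
end

section
/- Vanishing boundary term: assume moreover that E[e^{θ ξ_0}] < ∞ and E[e^{θ M_0}] < ∞ for some θ > 0, and for n ∈ ℕ let k(n) := max{k ≥ 0 : τ_k ≤ n}. Then the remainder of the ergodic average after the last completed cycle vanishes: (1/n) Σ_{j=τ_{k(n)}+1}^{n} X_j → 0 almost surely and in L² as n → ∞. -/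
open MeasureTheory Filter
open scoped ENNReal

private lemma pow4_le_exp {θ x : ℝ} (hθ : 0 < θ) (hx : 0 ≤ x) :
    x ^ 4 ≤ (4 / θ) ^ 4 * Real.exp (θ * x) := by
  have h0 : 0 ≤ θ * x / 4 := by positivity
  have h1 : θ * x / 4 ≤ Real.exp (θ * x / 4) := by
    have := Real.add_one_le_exp (θ * x / 4); linarith
  calc x ^ 4 = (4 / θ) ^ 4 * (θ * x / 4) ^ 4 := by
        rw [← mul_pow]
        congr 1
        field_simp
    _ ≤ (4 / θ) ^ 4 * Real.exp (θ * x / 4) ^ 4 := by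
        have h2 := pow_le_pow_left₀ h0 h1 4
        have hc : (0:ℝ) ≤ (4/θ)^4 := by positivity
        exact mul_le_mul_of_nonneg_left h2 hc
    _ = (4 / θ) ^ 4 * Real.exp (θ * x) := by
        rw [← Real.exp_nat_mul]
        congr 1
        push_cast
        ring

private lemma Gmeas : Measurable (fun p : ℕ × (ℕ → ℝ) => (p.1 : ℝ) * sSup (p.2 '' Set.Iio p.1)) := by
  have h : Measurable fun q : (ℕ → ℝ) × ℕ => (q.2 : ℝ) * sSup (q.1 '' Set.Iio q.2) := by
    apply measurable_from_prod_countable_left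
    intro m
    rcases Nat.eq_zero_or_pos m with hm | hm
    · subst hm
      simp only [Nat.cast_zero, zero_mul]
      exact measurable_const
    · have hne : (Finset.range m).Nonempty := ⟨0, Finset.mem_range.mpr hm⟩
      have heq : ∀ g : ℕ → ℝ, sSup (g '' Set.Iio m)
          = ((Finset.range m).sup' hne (fun i => (fun h : ℕ → ℝ => h i))) g := by
        intro g
        rw [Finset.sup'_apply, Finset.sup'_eq_csSup_image, Finset.coe_range]
      simp_rw [heq]
      exact measurable_const.mul
        ((Finset.measurable_sup' hne (fun i _ => measurable_pi_apply i)).comp measurable_id)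
  exact h.comp measurable_swap

theorem stmt_14
    {Ω : Type*} {m0 : MeasurableSpace Ω} {μ : Measure Ω} [IsProbabilityMeasure μ]
    (X : ℕ → Ω → ℝ) (τ : ℕ → Ω → ℕ)
    (hXmeas : ∀ n, Measurable (X n)) (hτmeas : ∀ k, Measurable (τ k))
    (hXnonneg : ∀ n, ∀ᵐ ω ∂μ, 0 ≤ X n ω)
    (hτ0 : ∀ ω, τ 0 ω = 0)
    (hτmono : ∀ᵐ ω ∂μ, ∀ k, τ k ω < τ (k + 1) ω)
    (C : ℕ → Ω → ℕ × (ℕ → ℝ))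
    (hC : ∀ k ω, C k ω = (τ (k + 1) ω - τ k ω,
      fun j => if j < τ (k + 1) ω - τ k ω then X (τ k ω + 1 + j) ω else 0))
    (hiid : ProbabilityTheory.iIndepFun C μ)
    (hident : ∀ k, ProbabilityTheory.IdentDistrib (C k) (C 0) μ μ)
    (θ : ℝ) (hθ : 0 < θ)
    (hexpξ : Integrable (fun ω => Real.exp (θ * ((τ 1 ω - τ 0 ω : ℕ) : ℝ))) μ)
    (hexpM : Integrable (fun ω =>
      Real.exp (θ * sSup ((fun j => X j ω) '' Set.Icc (τ 0 ω + 1) (τ 1 ω)))) μ)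
    (kn : ℕ → Ω → ℕ)
    (hkn : ∀ n ω, kn n ω = sSup {k : ℕ | τ k ω ≤ n}) :
    (∀ᵐ ω ∂μ, Tendsto
      (fun n : ℕ => (1 / (n : ℝ)) * ∑ j ∈ Finset.Icc (τ (kn n ω) ω + 1) n, X j ω)
      atTop (nhds 0)) ∧
    Tendsto (fun n : ℕ =>
        ∫ ω, ((1 / (n : ℝ)) * ∑ j ∈ Finset.Icc (τ (kn n ω) ω + 1) n, X j ω) ^ 2 ∂μ)
      atTop (nhds 0) := by
  classical
  set G : ℕ × (ℕ → ℝ) → ℝ := fun p => (p.1 : ℝ) * sSup (p.2 '' Set.Iio p.1) with hGdef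
  have hGmeas : Measurable G := Gmeas
  -- measurability of C
  have hXp : Measurable fun q : Ω × ℕ => X q.2 q.1 :=
    measurable_from_prod_countable_left fun n => hXmeas n
  have hCmeas : ∀ k, Measurable (C k) := by
    intro k
    have h1 : Measurable fun ω => τ (k+1) ω - τ k ω := (hτmeas (k+1)).sub (hτmeas k)
    have h2 : Measurable fun ω => (fun j =>
        if j < τ (k+1) ω - τ k ω then X (τ k ω + 1 + j) ω else 0 : ℕ → ℝ) := by
      apply measurable_pi_lambda
      intro j
      apply Measurable.ite (h1 measurableSet_Ioi)
      · exact hXp.comp (measurable_id.prodMk (((hτmeas k).add measurable_const).add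
          measurable_const))
      · exact measurable_const
    have hfe : C k = fun ω => ((τ (k+1) ω - τ k ω, fun j =>
        if j < τ (k+1) ω - τ k ω then X (τ k ω + 1 + j) ω else 0) : ℕ × (ℕ → ℝ)) :=
      funext (hC k)
    rw [hfe]
    exact h1.prodMk h2
  -- value of G ∘ C k on the good set
  have hbval : ∀ ω, (∀ k, τ k ω < τ (k + 1) ω) → ∀ k,
      G (C k ω) = ((τ (k+1) ω - τ k ω : ℕ) : ℝ) *
        sSup ((fun j => X j ω) '' Set.Icc (τ k ω + 1) (τ (k + 1) ω)) := by
    intro ω hm k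
    have hlt := hm k
    have himg : ((fun j => if j < τ (k+1) ω - τ k ω then X (τ k ω + 1 + j) ω else 0) ''
          Set.Iio (τ (k+1) ω - τ k ω))
        = (fun j => X j ω) '' Set.Icc (τ k ω + 1) (τ (k + 1) ω) := by
      ext x
      simp only [Set.mem_image, Set.mem_Iio, Set.mem_Icc]
      constructor
      · rintro ⟨j, hj, rfl⟩
        exact ⟨τ k ω + 1 + j, ⟨by omega, by omega⟩, (if_pos hj).symm⟩
      · rintro ⟨i, ⟨hi1, hi2⟩, rfl⟩
        refine ⟨i - (τ k ω + 1), by omega, ?_⟩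
        rw [if_pos (by omega)]
        congr 1
        omega
    rw [hC]
    simp only [hGdef]
    rw [himg]
  -- k ≤ τ k on the good set
  have hta : ∀ ω, (∀ k, τ k ω < τ (k + 1) ω) → ∀ k, k ≤ τ k ω := by
    intro ω hm k
    induction k with
    | zero => exact Nat.zero_le _
    | succ k ih => have := hm k; omega
  -- basic facts about kn
  have hknle : ∀ ω, (∀ k, τ k ω < τ (k + 1) ω) → ∀ n,
      τ (kn n ω) ω ≤ n ∧ n < τ (kn n ω + 1) ω ∧ kn n ω ≤ n := by
    intro ω hm n
    have hne : ({k | τ k ω ≤ n} : Set ℕ).Nonempty := ⟨0, by simp [hτ0 ω]⟩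
    have hbdd : BddAbove {k | τ k ω ≤ n} := ⟨n, fun k hk => le_trans (hta ω hm k) hk⟩
    have hmem : τ (kn n ω) ω ≤ n := by
      rw [hkn]; exact Nat.sSup_mem hne hbdd
    refine ⟨hmem, ?_, le_trans (hta ω hm _) hmem⟩
    by_contra h
    push_neg at h
    have h2 : kn n ω + 1 ≤ kn n ω := by
      conv_rhs => rw [hkn]
      exact le_csSup hbdd h
    omega
  have hknlb : ∀ ω K n, (∀ k, τ k ω < τ (k + 1) ω) → τ K ω ≤ n → K ≤ kn n ω := by
    intro ω K n hm hK
    rw [hkn]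
    exact le_csSup ⟨n, fun k hk => le_trans (hta ω hm k) hk⟩ hK
  -- nonnegativity of the cycle max and of G ∘ C k
  have hMfacts : ∀ ω, (∀ k, τ k ω < τ (k + 1) ω) → (∀ j, 0 ≤ X j ω) → ∀ k,
      (0 ≤ sSup ((fun j => X j ω) '' Set.Icc (τ k ω + 1) (τ (k + 1) ω))) ∧
      (∀ j, τ k ω + 1 ≤ j → j ≤ τ (k+1) ω →
        X j ω ≤ sSup ((fun j => X j ω) '' Set.Icc (τ k ω + 1) (τ (k + 1) ω))) := by
    intro ω hm hX k
    have hbdd : BddAbove ((fun j => X j ω) '' Set.Icc (τ k ω + 1) (τ (k+1) ω)) :=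
      ((Set.finite_Icc _ _).image _).bddAbove
    have hle : ∀ j, τ k ω + 1 ≤ j → j ≤ τ (k+1) ω →
        X j ω ≤ sSup ((fun j => X j ω) '' Set.Icc (τ k ω + 1) (τ (k + 1) ω)) :=
      fun j hj1 hj2 => le_csSup hbdd ⟨j, ⟨hj1, hj2⟩, rfl⟩
    exact ⟨le_trans (hX (τ (k+1) ω)) (hle _ (by have := hm k; omega) le_rfl), hle⟩
  have hbnn : ∀ ω, (∀ k, τ k ω < τ (k + 1) ω) → (∀ j, 0 ≤ X j ω) → ∀ k,
      0 ≤ G (C k ω) := by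
    intro ω hm hX k
    rw [hbval ω hm k]
    exact mul_nonneg (Nat.cast_nonneg _) (hMfacts ω hm hX k).1
  -- bound on the boundary sum
  have hsumle : ∀ ω, (∀ k, τ k ω < τ (k + 1) ω) → (∀ j, 0 ≤ X j ω) → ∀ n,
      0 ≤ (∑ j ∈ Finset.Icc (τ (kn n ω) ω + 1) n, X j ω) ∧
      (∑ j ∈ Finset.Icc (τ (kn n ω) ω + 1) n, X j ω) ≤ G (C (kn n ω) ω) := by
    intro ω hm hX n
    obtain ⟨h1, h2, h3⟩ := hknle ω hm n
    set K := kn n ω with hK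
    obtain ⟨hM0, hMle⟩ := hMfacts ω hm hX K
    constructor
    · exact Finset.sum_nonneg fun j _ => hX j
    · rw [hbval ω hm K]
      calc (∑ j ∈ Finset.Icc (τ K ω + 1) n, X j ω)
          ≤ (Finset.Icc (τ K ω + 1) n).card •
            sSup ((fun j => X j ω) '' Set.Icc (τ K ω + 1) (τ (K + 1) ω)) := by
            apply Finset.sum_le_card_nsmul
            intro j hj
            rw [Finset.mem_Icc] at hj
            exact hMle j hj.1 (by omega)
        _ = ((n + 1 - (τ K ω + 1) : ℕ) : ℝ) *
            sSup ((fun j => X j ω) '' Set.Icc (τ K ω + 1) (τ (K + 1) ω)) := by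
            rw [Nat.card_Icc, nsmul_eq_mul]
        _ ≤ ((τ (K+1) ω - τ K ω : ℕ) : ℝ) *
            sSup ((fun j => X j ω) '' Set.Icc (τ K ω + 1) (τ (K + 1) ω)) := by
            apply mul_le_mul_of_nonneg_right _ hM0
            exact Nat.cast_le.mpr (by omega)
  -- identical distribution of G ∘ C k
  have hbid : ∀ k, ProbabilityTheory.IdentDistrib (fun ω => G (C k ω)) (fun ω => G (C 0 ω)) μ μ :=
    fun k => (hident k).comp hGmeas
  have hbsqid : ∀ k, ProbabilityTheory.IdentDistrib
      (fun ω => (G (C k ω))^2) (fun ω => (G (C 0 ω))^2) μ μ :=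
    fun k => (hident k).comp ((measurable_id.pow_const 2).comp hGmeas)
  have hXae : ∀ᵐ ω ∂μ, ∀ n, 0 ≤ X n ω := ae_all_iff.mpr hXnonneg
  -- integrability of (G ∘ C 0)^2
  set c : ℝ := (4 / θ) ^ 4 with hc
  have hb0m : Measurable fun ω => G (C 0 ω) := hGmeas.comp (hCmeas 0)
  have hb0sq_int : Integrable (fun ω => (G (C 0 ω))^2) μ := by
    apply Integrable.mono' ((hexpξ.const_mul c).add (hexpM.const_mul c))
      ((hb0m.pow_const 2).aestronglyMeasurable)
    filter_upwards [hτmono, hXae] with ω hm hX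
    rw [Real.norm_eq_abs, abs_of_nonneg (sq_nonneg _)]
    have hv := hbval ω hm 0
    simp only [zero_add] at hv
    rw [hv]
    set a : ℝ := ((τ 1 ω - τ 0 ω : ℕ) : ℝ) with ha
    set M : ℝ := sSup ((fun j => X j ω) '' Set.Icc (τ 0 ω + 1) (τ 1 ω)) with hM
    have ha0 : 0 ≤ a := Nat.cast_nonneg _
    have hM0 : 0 ≤ M := by
      have := (hMfacts ω hm hX 0).1
      simpa only [zero_add] using this
    have h4a : a ^ 4 ≤ c * Real.exp (θ * a) := pow4_le_exp hθ ha0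
    have h4M : M ^ 4 ≤ c * Real.exp (θ * M) := pow4_le_exp hθ hM0
    have hsq : (a * M) ^ 2 ≤ a ^ 4 + M ^ 4 := by nlinarith [sq_nonneg (a^2 - M^2), sq_nonneg (a*M)]
    calc (a * M) ^ 2 ≤ a ^ 4 + M ^ 4 := hsq
      _ ≤ c * Real.exp (θ * a) + c * Real.exp (θ * M) := add_le_add h4a h4M
  have hbksq_int : ∀ k, Integrable (fun ω => (G (C k ω))^2) μ :=
    fun k => ((hbsqid k).integrable_iff).mpr hb0sq_int
  have hbksq_eq : ∀ k, ∫ ω, (G (C k ω))^2 ∂μ = ∫ ω, (G (C 0 ω))^2 ∂μ :=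
    fun k => (hbsqid k).integral_eq
  set I0 : ℝ := ∫ ω, (G (C 0 ω))^2 ∂μ with hI0
  have hI00 : 0 ≤ I0 := integral_nonneg fun ω => sq_nonneg _
  -- Chebyshev
  have hcheb : ∀ r : ℝ, 0 < r → μ {ω | r ≤ G (C 0 ω)} ≤ ENNReal.ofReal (I0 / r ^ 2) := by
    intro r hr
    have hsub : {ω | r ≤ G (C 0 ω)} ⊆ {ω | r ^ 2 ≤ (G (C 0 ω)) ^ 2} := by
      intro ω hω
      exact pow_le_pow_left₀ hr.le hω 2
    have h1 : r ^ 2 * (μ {ω | r ^ 2 ≤ (G (C 0 ω)) ^ 2}).toReal ≤ I0 :=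
      mul_meas_ge_le_integral_of_nonneg (ae_of_all _ fun ω => sq_nonneg _) hb0sq_int (r ^ 2)
    have h2 : (μ {ω | r ≤ G (C 0 ω)}).toReal ≤ I0 / r ^ 2 := by
      have h3 : (μ {ω | r ≤ G (C 0 ω)}).toReal ≤ (μ {ω | r ^ 2 ≤ (G (C 0 ω)) ^ 2}).toReal :=
        ENNReal.toReal_mono (measure_ne_top μ _) (measure_mono hsub)
      rw [le_div_iff₀ (by positivity)]
      calc (μ {ω | r ≤ G (C 0 ω)}).toReal * r ^ 2
          ≤ (μ {ω | r ^ 2 ≤ (G (C 0 ω)) ^ 2}).toReal * r ^ 2 :=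
            mul_le_mul_of_nonneg_right h3 (by positivity)
        _ ≤ I0 := by rw [mul_comm]; exact h1
    exact (ENNReal.le_ofReal_iff_toReal_le (measure_ne_top μ _) (by positivity)).mpr h2
  -- Borel-Cantelli
  have hBC : ∀ ε : ℝ, 0 < ε → ∀ᵐ ω ∂μ, ∀ᶠ k in atTop, G (C k ω) < ε * k := by
    intro ε hε
    set s : ℕ → Set Ω := fun k => (fun ω => G (C k ω)) ⁻¹' Set.Ici (ε * k) with hs
    have hmeq : ∀ k, μ (s k) = μ ((fun ω => G (C 0 ω)) ⁻¹' Set.Ici (ε * k)) :=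
      fun k => (hbid k).measure_mem_eq measurableSet_Ici
    have hbound : ∀ k : ℕ, μ (s k) ≤
        ENNReal.ofReal (I0 / ε ^ 2 * (1 / (k:ℝ) ^ 2)) + (if k = 0 then 1 else 0) := by
      intro k
      rcases Nat.eq_zero_or_pos k with hk | hk
      · subst hk
        simp only [if_pos rfl]
        calc μ (s 0) ≤ 1 := prob_le_one
          _ ≤ _ := le_add_self
      · have hεk : (0:ℝ) < ε * k := by positivity
        have h1 : μ (s k) ≤ ENNReal.ofReal (I0 / (ε * k) ^ 2) := by
          rw [hmeq k]
          exact hcheb (ε * k) hεk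
        have h2 : I0 / (ε * (k:ℝ)) ^ 2 = I0 / ε ^ 2 * (1 / (k:ℝ) ^ 2) := by
          rw [mul_pow, mul_one_div, div_div]
        rw [h2] at h1
        exact h1.trans le_self_add
    have hsum : (∑' k, μ (s k)) ≠ ⊤ := by
      have hsummable : Summable (fun k : ℕ => I0 / ε ^ 2 * (1 / (k:ℝ) ^ 2)) :=
        (Real.summable_one_div_nat_pow.mpr one_lt_two).mul_left _
      have h1 : (∑' k, μ (s k)) ≤
          ∑' k : ℕ, (ENNReal.ofReal (I0 / ε ^ 2 * (1 / (k:ℝ) ^ 2)) + (if k = 0 then 1 else 0)) :=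
        ENNReal.tsum_le_tsum hbound
      have h2 : (∑' k : ℕ, (ENNReal.ofReal (I0 / ε ^ 2 * (1 / (k:ℝ) ^ 2))
            + (if k = 0 then (1:ℝ≥0∞) else 0)))
          = (∑' k : ℕ, ENNReal.ofReal (I0 / ε ^ 2 * (1 / (k:ℝ) ^ 2)))
            + ∑' k : ℕ, (if k = 0 then (1:ℝ≥0∞) else 0) := ENNReal.tsum_add
      have h3 : (∑' k : ℕ, ENNReal.ofReal (I0 / ε ^ 2 * (1 / (k:ℝ) ^ 2)))
          = ENNReal.ofReal (∑' k : ℕ, I0 / ε ^ 2 * (1 / (k:ℝ) ^ 2)) :=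
        (ENNReal.ofReal_tsum_of_nonneg (fun k => by positivity) hsummable).symm
      have h4 : (∑' k : ℕ, (if k = 0 then (1:ℝ≥0∞) else 0)) = 1 := tsum_ite_eq 0 1
      apply ne_top_of_le_ne_top _ h1
      rw [h2, h3, h4]
      exact ENNReal.add_ne_top.mpr ⟨ENNReal.ofReal_ne_top, ENNReal.one_ne_top⟩
    filter_upwards [ae_eventually_notMem hsum] with ω hω
    filter_upwards [hω] with k hk
    simpa [hs, Set.mem_preimage, Set.mem_Ici, not_le] using hk
  have haeBC : ∀ᵐ ω ∂μ, ∀ m : ℕ, ∀ᶠ k in atTop, G (C k ω) < (1 / ((m:ℝ) + 1)) * k :=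
    ae_all_iff.mpr fun m => hBC _ (by positivity)
  constructor
  · -- almost sure convergence
    filter_upwards [hτmono, hXae, haeBC] with ω hm hX hB
    apply squeeze_zero (g := fun n : ℕ => G (C (kn n ω) ω) * (1 / (n:ℝ)))
    · intro n
      exact mul_nonneg (by positivity) (hsumle ω hm hX n).1
    · intro n
      rw [mul_comm (G (C (kn n ω) ω))]
      exact mul_le_mul_of_nonneg_left (hsumle ω hm hX n).2 (by positivity)
    · rw [Metric.tendsto_atTop]
      intro ε hε
      obtain ⟨m, hmε⟩ := exists_nat_one_div_lt hε
      obtain ⟨K0, hK0⟩ := eventually_atTop.mp (hB m)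
      refine ⟨max (τ (max K0 1) ω) 1, fun n hn => ?_⟩
      have hn1 : 1 ≤ n := le_trans (le_max_right _ _) hn
      have hnpos : (0:ℝ) < n := by exact_mod_cast hn1
      have hkn1 : max K0 1 ≤ kn n ω :=
        hknlb ω _ n hm (le_trans (le_max_left _ _) hn)
      have hKK0 : K0 ≤ kn n ω := le_trans (le_max_left _ _) hkn1
      have hKn : kn n ω ≤ n := (hknle ω hm n).2.2
      have hb := hK0 (kn n ω) hKK0
      have hg0 : 0 ≤ G (C (kn n ω) ω) := hbnn ω hm hX (kn n ω)
      have hval : G (C (kn n ω) ω) * (1 / (n:ℝ)) < ε := by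
        have h1 : G (C (kn n ω) ω) * (1/(n:ℝ)) ≤ (1 / ((m:ℝ)+1)) * (kn n ω) * (1/(n:ℝ)) :=
          mul_le_mul_of_nonneg_right hb.le (by positivity)
        have h2 : (1 / ((m:ℝ)+1)) * (kn n ω) * (1/(n:ℝ)) ≤ 1 / ((m:ℝ)+1) := by
          have hKn' : ((kn n ω : ℕ):ℝ) ≤ (n:ℝ) := by exact_mod_cast hKn
          rw [mul_assoc]
          calc (1 / ((m:ℝ)+1)) * (((kn n ω : ℕ):ℝ) * (1/(n:ℝ)))
              ≤ (1 / ((m:ℝ)+1)) * 1 := by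
                apply mul_le_mul_of_nonneg_left _ (by positivity)
                rw [mul_one_div, div_le_one hnpos]
                exact hKn'
            _ = 1 / ((m:ℝ)+1) := mul_one _
        exact lt_of_le_of_lt (h1.trans h2) hmε
      rw [Real.dist_eq, sub_zero, abs_of_nonneg (mul_nonneg hg0 (by positivity))]
      exact hval
  · -- L² convergence
    have hTsq : ∀ n : ℕ, ∀ᵐ ω ∂μ,
        ((1 / (n:ℝ)) * ∑ j ∈ Finset.Icc (τ (kn n ω) ω + 1) n, X j ω) ^ 2
          ≤ (1 / (n:ℝ)^2) * ∑ k ∈ Finset.range (n+1), (G (C k ω))^2 := by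
      intro n
      filter_upwards [hτmono, hXae] with ω hm hX
      obtain ⟨hs0, hsb⟩ := hsumle ω hm hX n
      have h3 : kn n ω ≤ n := (hknle ω hm n).2.2
      have h4 : ((1 / (n:ℝ)) * ∑ j ∈ Finset.Icc (τ (kn n ω) ω + 1) n, X j ω) ^ 2
          ≤ (1 / (n:ℝ))^2 * (G (C (kn n ω) ω))^2 := by
        rw [mul_pow]
        exact mul_le_mul_of_nonneg_left (pow_le_pow_left₀ hs0 hsb 2) (by positivity)
      refine h4.trans ?_
      have h5 : (G (C (kn n ω) ω))^2 ≤ ∑ k ∈ Finset.range (n+1), (G (C k ω))^2 :=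
        Finset.single_le_sum (f := fun k => (G (C k ω))^2) (fun k _ => sq_nonneg _)
          (Finset.mem_range.mpr (by omega))
      have h6 : (1 / (n:ℝ))^2 = 1 / (n:ℝ)^2 := by rw [div_pow, one_pow]
      rw [h6]
      exact mul_le_mul_of_nonneg_left h5 (by positivity)
    have hIbnd : ∀ n : ℕ,
        ∫ ω, ((1 / (n:ℝ)) * ∑ j ∈ Finset.Icc (τ (kn n ω) ω + 1) n, X j ω) ^ 2 ∂μ
          ≤ 1 / (n:ℝ)^2 * (((n:ℝ)+1) * I0) := by
      intro n
      have hint : Integrable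
          (fun ω => (1 / (n:ℝ)^2) * ∑ k ∈ Finset.range (n+1), (G (C k ω))^2) μ :=
        (integrable_finset_sum _ (fun k _ => hbksq_int k)).const_mul _
      have h1 := integral_mono_of_nonneg (ae_of_all _ fun ω => sq_nonneg _) hint (hTsq n)
      refine h1.trans (le_of_eq ?_)
      calc ∫ ω, (1/(n:ℝ)^2) * ∑ k ∈ Finset.range (n+1), (G (C k ω))^2 ∂μ
          = (1/(n:ℝ)^2) * ∫ ω, ∑ k ∈ Finset.range (n+1), (G (C k ω))^2 ∂μ :=
            integral_const_mul _ _
        _ = (1/(n:ℝ)^2) * ∑ k ∈ Finset.range (n+1), ∫ ω, (G (C k ω))^2 ∂μ := by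
            rw [integral_finset_sum _ (fun k _ => hbksq_int k)]
        _ = 1/(n:ℝ)^2 * (((n:ℝ)+1) * I0) := by
            rw [Finset.sum_congr rfl (fun k _ => hbksq_eq k), Finset.sum_const,
              Finset.card_range, nsmul_eq_mul]
            push_cast
            ring
    have htend : Tendsto (fun n : ℕ => 1/(n:ℝ)^2 * (((n:ℝ)+1) * I0)) atTop (nhds 0) := by
      have h1 : Tendsto (fun n : ℕ => 1/(n:ℝ)) atTop (nhds 0) :=
        tendsto_one_div_atTop_nhds_zero_nat
      have heq : ∀ n : ℕ, 1/(n:ℝ)^2 * (((n:ℝ)+1) * I0)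
          = (1/(n:ℝ) + (1/(n:ℝ)) * (1/(n:ℝ))) * I0 := by
        intro n
        rcases Nat.eq_zero_or_pos n with h | h
        · subst h; norm_num
        · have hn0 : ((n:ℝ)) ≠ 0 := Nat.cast_ne_zero.mpr (by omega)
          have hco : 1/(n:ℝ)^2 * ((n:ℝ)+1) = 1/(n:ℝ) + (1/(n:ℝ))*(1/(n:ℝ)) := by
            rw [one_div_mul_one_div, ← sq, div_mul_eq_mul_div, one_mul,
              div_add_div _ _ hn0 (pow_ne_zero 2 hn0),
              div_eq_div_iff (pow_ne_zero 2 hn0) (mul_ne_zero hn0 (pow_ne_zero 2 hn0))]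
            ring
          calc 1/(n:ℝ)^2 * (((n:ℝ)+1) * I0) = (1/(n:ℝ)^2 * ((n:ℝ)+1)) * I0 := by ring
            _ = (1/(n:ℝ) + (1/(n:ℝ)) * (1/(n:ℝ))) * I0 := by rw [hco]
      simp_rw [heq]
      have h2 := (h1.add (h1.mul h1)).mul_const I0
      simpa using h2
    exact squeeze_zero (fun n => integral_nonneg fun ω => sq_nonneg _) hIbnd htend
end
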